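/- arXiv:1902.07556 — 4 statements merged into one kernel-verified Lean document; each statement's English description precedes it below -/
import Mathlib

section
/- Let P_1, ..., P_n be orthogonal projections on a finite-dimensional complex inner product space and let ψ be a unit vector. Define V = (1/n) Σ_i ‖P_i ψ‖² and, for a positive integer t, F = (1/n^t) Σ_{i_1,...,i_t} ‖P_{i_t} ⋯ P_{i_1} ψ‖². Then F ≥ V^(2t−1). -/
open Finset

/-- Apply the projections `P (iv 0), P (iv 1), ..., P (iv (t-1))` to `ψ` in this order,
so that the result is `P_{i_t} ⋯ P_{i_1} ψ`. -/
noncomputable def seqApply {E : Type*} [NormedAddCommGroup E] [InnerProductSpace ℂ E]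
    {n t : ℕ} (P : Fin n → (E →ₗ[ℂ] E)) (iv : Fin t → Fin n) (ψ : E) : E :=
  (List.ofFn fun k => P (iv k)).foldl (fun v Q => Q v) ψ

section Helpers

variable {E : Type*} [NormedAddCommGroup E] [InnerProductSpace ℂ E]

local notation "⟪" x ", " y "⟫" => @inner ℂ _ _ x y

lemma seqApply_nil {n : ℕ} (P : Fin n → (E →ₗ[ℂ] E)) (g : Fin 0 → Fin n) (v : E) :
    seqApply P g v = v := by
  simp [seqApply]

lemma seqApply_cons {n t : ℕ} (P : Fin n → (E →ₗ[ℂ] E)) (i : Fin n)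
    (g : Fin t → Fin n) (v : E) :
    seqApply P (Fin.cons i g) v = seqApply P g (P i v) := by
  simp [seqApply, List.ofFn_succ]

lemma sum_succ_split {n t : ℕ} (F : (Fin (t + 1) → Fin n) → ℝ) :
    ∑ iv : Fin (t + 1) → Fin n, F iv
      = ∑ i : Fin n, ∑ g : Fin t → Fin n, F (Fin.cons i g) := by
  calc ∑ iv : Fin (t + 1) → Fin n, F iv
      = ∑ p : Fin n × (Fin t → Fin n), F (Fin.cons p.1 p.2) := by
        refine Fintype.sum_equiv (Fin.consEquiv (fun _ : Fin (t + 1) => Fin n)).symm _ _ (fun iv => ?_)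
        show F iv = F (Fin.cons (iv 0) (Fin.tail iv))
        congr 1
        exact (Fin.cons_self_tail iv).symm
    _ = _ := Fintype.sum_prod_type _

lemma norm_sq_proj (Q : E →ₗ[ℂ] E) (hp : Q ∘ₗ Q = Q) (hs : Q.IsSymmetric) (v : E) :
    Complex.re ⟪v, Q v⟫ = ‖Q v‖ ^ 2 := by
  have h1 : Q (Q v) = Q v := by rw [← LinearMap.comp_apply, hp]
  have h2 : ⟪Q v, Q v⟫ = ⟪v, Q v⟫ := by rw [hs v (Q v), h1]
  rw [← h2]
  exact inner_self_eq_norm_sq (𝕜 := ℂ) (Q v)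

lemma jensen_quad {n : ℕ} (X : E →ₗ[ℂ] E) (hX : X.IsSymmetric)
    (hXpos : ∀ w : E, 0 ≤ Complex.re ⟪w, X w⟫) (u : Fin n → E) :
    Complex.re ⟪∑ i, u i, X (∑ i, u i)⟫ ≤ (n : ℝ) * ∑ i, Complex.re ⟪u i, X (u i)⟫ := by
  set B : Fin n → Fin n → ℝ := fun i j => Complex.re ⟪u i, X (u j)⟫ with hB
  have hBsymm : ∀ i j, B j i = B i j := by
    intro i j
    calc Complex.re ⟪u j, X (u i)⟫
        = Complex.re ((starRingEnd ℂ) ⟪X (u i), u j⟫) := by rw [inner_conj_symm]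
      _ = Complex.re ((starRingEnd ℂ) ⟪u i, X (u j)⟫) := by rw [hX]
      _ = Complex.re ⟪u i, X (u j)⟫ := Complex.conj_re _
  have hexp : Complex.re ⟪∑ i, u i, X (∑ i, u i)⟫ = ∑ i, ∑ j, B i j := by
    rw [map_sum, sum_inner, Complex.re_sum]
    refine Finset.sum_congr rfl fun i _ => ?_
    rw [inner_sum, Complex.re_sum]
  have hij : ∀ i j, 0 ≤ B i i + B j j - 2 * B i j := by
    intro i j
    have h := hXpos (u i - u j)
    have hexpand : Complex.re ⟪u i - u j, X (u i - u j)⟫ = B i i + B j j - B i j - B j i := by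
      rw [map_sub, inner_sub_left, inner_sub_right, inner_sub_right]
      simp only [Complex.sub_re, hB]
      ring
    rw [hexpand, hBsymm i j] at h
    linarith
  have key : 0 ≤ ∑ i, ∑ j, (B i i + B j j - 2 * B i j) :=
    Finset.sum_nonneg fun i _ => Finset.sum_nonneg fun j _ => hij i j
  have e1 : ∑ i : Fin n, ∑ j : Fin n, (B i i + B j j - 2 * B i j)
      = (n : ℝ) * (∑ i, B i i) + (n : ℝ) * (∑ i, B i i) - 2 * ∑ i, ∑ j, B i j := by
    have einner : ∀ i : Fin n, ∑ j : Fin n, (B i i + B j j - 2 * B i j)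
        = (n : ℝ) * B i i + (∑ j, B j j) - 2 * ∑ j, B i j := by
      intro i
      rw [Finset.sum_sub_distrib, Finset.sum_add_distrib, Finset.sum_const, Finset.card_univ,
        Fintype.card_fin, nsmul_eq_mul, ← Finset.mul_sum]
    rw [Finset.sum_congr rfl fun i _ => einner i]
    rw [Finset.sum_sub_distrib, Finset.sum_add_distrib, Finset.sum_const, Finset.card_univ,
      Fintype.card_fin, nsmul_eq_mul]
    rw [← Finset.mul_sum]
    ring_nf
    rw [← Finset.sum_mul]
  rw [hexp]
  rw [e1] at key
  linarith

end Helpers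

section Main

variable {E : Type*} [NormedAddCommGroup E] [InnerProductSpace ℂ E]

local notation "⟪" x ", " y "⟫" => @inner ℂ _ _ x y

variable {n : ℕ} (P : Fin n → (E →ₗ[ℂ] E))

lemma S_symm (hsym : ∀ i, (P i).IsSymmetric) : (∑ i, P i).IsSymmetric := by
  intro x y
  simp only [LinearMap.sum_apply, sum_inner, inner_sum]
  exact Finset.sum_congr rfl fun i _ => hsym i x y

lemma S_inner (hproj : ∀ i, (P i) ∘ₗ (P i) = P i) (hsym : ∀ i, (P i).IsSymmetric) (v : E) :
    Complex.re ⟪v, (∑ i, P i) v⟫ = ∑ i, ‖P i v‖ ^ 2 := by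
  have h : ⟪v, (∑ i, P i) v⟫ = ∑ i, ⟪v, P i v⟫ := by
    rw [LinearMap.sum_apply, inner_sum]
  rw [h, Complex.re_sum]
  exact Finset.sum_congr rfl fun i _ => norm_sq_proj (P i) (hproj i) (hsym i) v

lemma S_pos (hproj : ∀ i, (P i) ∘ₗ (P i) = P i) (hsym : ∀ i, (P i).IsSymmetric) (v : E) :
    0 ≤ Complex.re ⟪v, (∑ i, P i) v⟫ := by
  rw [S_inner P hproj hsym v]
  exact Finset.sum_nonneg fun i _ => by positivity

lemma S_pow_odd_pos (hproj : ∀ i, (P i) ∘ₗ (P i) = P i) (hsym : ∀ i, (P i).IsSymmetric)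
    (k : ℕ) (w : E) : 0 ≤ Complex.re ⟪w, ((∑ i, P i) ^ (2 * k + 1)) w⟫ := by
  set S := ∑ i, P i with hSdef
  have hS : S.IsSymmetric := S_symm P hsym
  have h1 : S ^ (2 * k + 1) = S ^ k * S * S ^ k := by
    rw [mul_assoc, ← pow_succ', ← pow_add]
    congr 1
    omega
  have h2 : (S ^ (2 * k + 1)) w = (S ^ k) (S ((S ^ k) w)) := by rw [h1]; rfl
  rw [h2, ← (hS.pow k) w (S ((S ^ k) w))]
  exact S_pos P hproj hsym _

lemma key_ineq (hproj : ∀ i, (P i) ∘ₗ (P i) = P i) (hsym : ∀ i, (P i).IsSymmetric) :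
    ∀ (t : ℕ) (v : E),
      Complex.re ⟪v, ((∑ i, P i) ^ (2 * t + 1)) v⟫
        ≤ (n : ℝ) ^ t * ∑ iv : Fin (t + 1) → Fin n, ‖seqApply P iv v‖ ^ 2 := by
  have hS : (∑ i, P i).IsSymmetric := S_symm P hsym
  intro t
  induction t with
  | zero =>
    intro v
    rw [sum_succ_split (fun iv => ‖seqApply P iv v‖ ^ 2)]
    simp only [seqApply_cons, seqApply_nil]
    have h0 : ∀ i : Fin n, ∑ g : Fin 0 → Fin n, ‖(P i) v‖ ^ 2 = ‖(P i) v‖ ^ 2 := by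
      intro i
      exact Fintype.sum_unique _
    rw [Finset.sum_congr rfl fun i _ => h0 i]
    rw [pow_zero, one_mul, pow_one]
    exact le_of_eq (S_inner P hproj hsym v)
  | succ s ih =>
    intro v
    set S := ∑ i, P i with hSdef
    have hpow : S ^ (2 * (s + 1) + 1) = S * S ^ (2 * s + 1) * S := by
      rw [← pow_succ', ← pow_succ]
      congr 1
    have h2 : (S ^ (2 * (s + 1) + 1)) v = S ((S ^ (2 * s + 1)) (S v)) := by rw [hpow]; rfl
    have h3 : Complex.re ⟪v, (S ^ (2 * (s + 1) + 1)) v⟫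
        = Complex.re ⟪S v, (S ^ (2 * s + 1)) (S v)⟫ := by
      rw [h2, ← hS v ((S ^ (2 * s + 1)) (S v))]
    have hSv : S v = ∑ i, P i v := by rw [hSdef]; exact LinearMap.sum_apply _ _ _
    have h4 := jensen_quad (S ^ (2 * s + 1)) (hS.pow _)
      (S_pow_odd_pos P hproj hsym s) (fun i => P i v)
    rw [← hSv] at h4
    have h5 : ∀ i : Fin n, Complex.re ⟪P i v, (S ^ (2 * s + 1)) (P i v)⟫
        ≤ (n : ℝ) ^ s * ∑ g : Fin (s + 1) → Fin n, ‖seqApply P g (P i v)‖ ^ 2 :=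
      fun i => ih (P i v)
    have h6 : ∑ i : Fin n, Complex.re ⟪P i v, (S ^ (2 * s + 1)) (P i v)⟫
        ≤ ∑ i : Fin n, (n : ℝ) ^ s * ∑ g : Fin (s + 1) → Fin n, ‖seqApply P g (P i v)‖ ^ 2 :=
      Finset.sum_le_sum fun i _ => h5 i
    have hsplit : ∑ iv : Fin (s + 2) → Fin n, ‖seqApply P iv v‖ ^ 2
        = ∑ i : Fin n, ∑ g : Fin (s + 1) → Fin n, ‖seqApply P g (P i v)‖ ^ 2 := by
      rw [sum_succ_split (fun iv => ‖seqApply P iv v‖ ^ 2)]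
      exact Finset.sum_congr rfl fun i _ => Finset.sum_congr rfl fun g _ => by
        rw [seqApply_cons]
    rw [h3, hsplit]
    calc Complex.re ⟪S v, (S ^ (2 * s + 1)) (S v)⟫
        ≤ (n : ℝ) * ∑ i, Complex.re ⟪P i v, (S ^ (2 * s + 1)) (P i v)⟫ := h4
      _ ≤ (n : ℝ) * ∑ i : Fin n, (n : ℝ) ^ s
            * ∑ g : Fin (s + 1) → Fin n, ‖seqApply P g (P i v)‖ ^ 2 := by
          have hn0 : (0:ℝ) ≤ (n : ℝ) := Nat.cast_nonneg n
          exact mul_le_mul_of_nonneg_left h6 hn0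
      _ = (n : ℝ) ^ (s + 1) * ∑ i : Fin n, ∑ g : Fin (s + 1) → Fin n,
            ‖seqApply P g (P i v)‖ ^ 2 := by
          rw [← Finset.mul_sum, ← mul_assoc, pow_succ]
          ring

end Main

section Spectral

variable {E : Type*} [NormedAddCommGroup E] [InnerProductSpace ℂ E] [FiniteDimensional ℂ E]

local notation "⟪" x ", " y "⟫" => @inner ℂ _ _ x y

lemma moment_bound {n : ℕ} (hn : 0 < n)
    (S : E →ₗ[ℂ] E) (hS : S.IsSymmetric)
    (hpos : ∀ w : E, 0 ≤ Complex.re ⟪w, S w⟫)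
    (ψ : E) (hψ : ‖ψ‖ = 1) (m : ℕ) :
    ((1 / (n : ℝ)) * Complex.re ⟪ψ, S ψ⟫) ^ m
      ≤ (1 / (n : ℝ) ^ m) * Complex.re ⟪ψ, (S ^ m) ψ⟫ := by
  have hd : Module.finrank ℂ E = Module.finrank ℂ E := rfl
  set d := Module.finrank ℂ E
  set b := hS.eigenvectorBasis hd with hb
  set μ := hS.eigenvalues hd with hμdef
  set c : Fin d → ℂ := fun i => b.repr ψ i with hc
  -- action of powers of S on the eigenbasis
  have hSpow : ∀ (k : ℕ) (i : Fin d), (S ^ k) (b i) = (((μ i : ℂ)) ^ k) • b i := by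
    intro k i
    induction k with
    | zero => simp
    | succ k ihk =>
      have hstep : (S ^ (k + 1)) (b i) = S ((S ^ k) (b i)) := by rw [pow_succ']; rfl
      rw [hstep, ihk, map_smul, hS.apply_eigenvectorBasis hd i, smul_smul]
      congr 1
  -- coordinates of (S ^ k) ψ
  have hcoord : ∀ (k : ℕ) (i : Fin d), b.repr ((S ^ k) ψ) i = ((μ i : ℂ)) ^ k * c i := by
    intro k i
    have h1 : b.repr ((S ^ k) ψ) i = ⟪b i, (S ^ k) ψ⟫ := b.repr_apply_apply _ _
    have h2 : c i = ⟪b i, ψ⟫ := b.repr_apply_apply _ _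
    rw [h1, h2, ← (hS.pow k) (b i) ψ, hSpow k i, inner_smul_left, ← Complex.ofReal_pow,
      Complex.conj_ofReal]
  -- moment formula
  have hrepr : ∀ k : ℕ, Complex.re ⟪ψ, (S ^ k) ψ⟫ = ∑ i, (μ i) ^ k * ‖c i‖ ^ 2 := by
    intro k
    rw [← b.repr.inner_map_map ψ ((S ^ k) ψ)]
    rw [PiLp.inner_apply]
    rw [Complex.re_sum]
    refine Finset.sum_congr rfl fun i _ => ?_
    rw [hcoord k i]
    have : (starRingEnd ℂ) (b.repr ψ i) = (starRingEnd ℂ) (c i) := by rw [hc]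
    rw [RCLike.inner_apply, this]
    have h1 : ((μ i : ℂ) ^ k * c i) * (starRingEnd ℂ) (c i)
        = ((μ i : ℝ) ^ k : ℝ) * ((starRingEnd ℂ) (c i) * c i) := by
      push_cast
      ring
    rw [h1, Complex.conj_mul']
    rw [← Complex.ofReal_pow, ← Complex.ofReal_mul, Complex.ofReal_re]
  -- weights sum to one
  have hw1 : ∑ i, ‖c i‖ ^ 2 = 1 := by
    have h0 := hrepr 0
    simp only [pow_zero, one_mul] at h0
    rw [← h0, Module.End.one_apply]
    have hself : Complex.re ⟪ψ, ψ⟫ = ‖ψ‖ ^ 2 := inner_self_eq_norm_sq (𝕜 := ℂ) ψ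
    rw [hself, hψ]
    norm_num
  -- eigenvalues are nonnegative
  have hμpos : ∀ i, 0 ≤ μ i := by
    intro i
    have h := hpos (b i)
    rw [hS.apply_eigenvectorBasis hd i, inner_smul_right] at h
    have hbi : ⟪b i, b i⟫ = 1 := by
      rw [inner_self_eq_norm_sq_to_K (𝕜 := ℂ), b.orthonormal.1 i]
      norm_num
    rw [hbi, mul_one] at h
    simpa using h
  have hn0 : (0:ℝ) < (n : ℝ) := Nat.cast_pos.mpr hn
  have hjensen := Real.pow_arith_mean_le_arith_mean_pow Finset.univ
    (fun i => ‖c i‖ ^ 2) (fun i => μ i / n)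
    (fun i _ => by positivity) hw1 (fun i _ => div_nonneg (hμpos i) hn0.le) m
  have e1 : (1 / (n : ℝ)) * Complex.re ⟪ψ, S ψ⟫ = ∑ i, ‖c i‖ ^ 2 * (μ i / n) := by
    have h1 := hrepr 1
    rw [pow_one] at h1
    rw [h1, Finset.mul_sum]
    exact Finset.sum_congr rfl fun i _ => by rw [pow_one]; ring
  have e2 : (1 / (n : ℝ) ^ m) * Complex.re ⟪ψ, (S ^ m) ψ⟫ = ∑ i, ‖c i‖ ^ 2 * (μ i / n) ^ m := by
    rw [hrepr m, Finset.mul_sum]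
    refine Finset.sum_congr rfl fun i _ => ?_
    rw [div_pow]
    ring
  rw [e1, e2]
  exact hjensen

end Spectral

theorem projection_rewinding_general
    {E : Type*} [NormedAddCommGroup E] [InnerProductSpace ℂ E] [FiniteDimensional ℂ E]
    {n t : ℕ} (hn : 0 < n) (ht : 0 < t)
    (P : Fin n → (E →ₗ[ℂ] E))
    (hproj : ∀ i, (P i) ∘ₗ (P i) = P i)
    (hsym : ∀ i, (P i).IsSymmetric)
    (ψ : E) (hψ : ‖ψ‖ = 1) :
    (1 / (n : ℝ) ^ t) * ∑ iv : Fin t → Fin n, ‖seqApply P iv ψ‖ ^ 2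
      ≥ ((1 / (n : ℝ)) * ∑ i, ‖P i ψ‖ ^ 2) ^ (2 * t - 1) := by
  obtain ⟨s, rfl⟩ : ∃ s, t = s + 1 := ⟨t - 1, by omega⟩
  have hn0 : (0:ℝ) < (n : ℝ) := Nat.cast_pos.mpr hn
  have hS : (∑ i, P i).IsSymmetric := S_symm P hsym
  have hSpos : ∀ w : E, 0 ≤ Complex.re (inner ℂ w ((∑ i, P i) w) : ℂ) := S_pos P hproj hsym
  have hkey := key_ineq P hproj hsym s ψ
  have hmom := moment_bound hn (∑ i, P i) hS hSpos ψ hψ (2 * s + 1)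
  have hV : ∑ i, ‖P i ψ‖ ^ 2 = Complex.re (inner ℂ ψ ((∑ i, P i) ψ) : ℂ) :=
    (S_inner P hproj hsym ψ).symm
  rw [ge_iff_le]
  have h2t : 2 * (s + 1) - 1 = 2 * s + 1 := by omega
  rw [h2t, hV]
  calc ((1 / (n : ℝ)) * Complex.re (inner ℂ ψ ((∑ i, P i) ψ) : ℂ)) ^ (2 * s + 1)
      ≤ (1 / (n : ℝ) ^ (2 * s + 1))
          * Complex.re (inner ℂ ψ (((∑ i, P i) ^ (2 * s + 1)) ψ) : ℂ) := hmom
    _ ≤ (1 / (n : ℝ) ^ (2 * s + 1))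
          * ((n : ℝ) ^ s * ∑ iv : Fin (s + 1) → Fin n, ‖seqApply P iv ψ‖ ^ 2) := by
        have : (0:ℝ) ≤ 1 / (n : ℝ) ^ (2 * s + 1) := by positivity
        exact mul_le_mul_of_nonneg_left hkey this
    _ = (1 / (n : ℝ) ^ (s + 1)) * ∑ iv : Fin (s + 1) → Fin n, ‖seqApply P iv ψ‖ ^ 2 := by
        have hpow : (n : ℝ) ^ (2 * s + 1) = (n : ℝ) ^ (s + 1) * (n : ℝ) ^ s := by
          rw [← pow_add]
          congr 1
          omega
        rw [hpow]
        field_simp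
end

section
/- Let P_1, ..., P_n be orthogonal projections on a finite-dimensional complex inner product space and ψ a unit vector. Then (1/n²) Σ_{i,j} ‖P_j P_i ψ‖² ≥ ((1/n) Σ_i ‖P_i ψ‖²)³. -/
open Finset

theorem projection_rewinding_t2
    {E : Type*} [NormedAddCommGroup E] [InnerProductSpace ℂ E] [FiniteDimensional ℂ E]
    {n : ℕ} (hn : 0 < n)
    (P : Fin n → (E →ₗ[ℂ] E))
    (hproj : ∀ i, (P i) ∘ₗ (P i) = P i)
    (hsym : ∀ i, (P i).IsSymmetric)
    (ψ : E) (hψ : ‖ψ‖ = 1) :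
    (1 / (n : ℝ) ^ 2) * ∑ i : Fin n, ∑ j : Fin n, ‖P j (P i ψ)‖ ^ 2
      ≥ ((1 / (n : ℝ)) * ∑ i, ‖P i ψ‖ ^ 2) ^ 3 := by
  have npos : (0:ℝ) < n := by exact_mod_cast hn
  set u : E := ∑ j : Fin n, P j ψ with hu
  set a : ℝ := ∑ i : Fin n, ‖P i ψ‖ ^ 2 with ha
  set K : ℝ := ∑ i : Fin n, ∑ j : Fin n, ‖P j (P i ψ)‖ ^ 2 with hK
  have hid : ∀ (i : Fin n) (v : E), P i (P i v) = P i v := by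
    intro i v
    have := congrArg (fun T : E →ₗ[ℂ] E => T v) (hproj i)
    simpa using this
  have hPP : ∀ (i : Fin n) (v w : E),
      (inner ℂ (P i v) (P i w) : ℂ) = inner ℂ v (P i w) := by
    intro i v w
    rw [hsym i v (P i w), hid i w]
  have hnorm : ∀ (i : Fin n) (v : E),
      ‖P i v‖ ^ 2 = RCLike.re (inner ℂ v (P i v) : ℂ) := by
    intro i v
    rw [← hPP i v v, inner_self_eq_norm_sq]
  have ha' : RCLike.re (inner ℂ ψ u : ℂ) = a := by
    rw [hu, inner_sum, map_sum, ha]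
    exact sum_congr rfl fun i _ => (hnorm i ψ).symm
  have hanon : 0 ≤ a := by positivity
  have hKnon : 0 ≤ K := by positivity
  -- Step D : a ≤ ‖u‖
  have hD : a ≤ ‖u‖ := by
    calc a = RCLike.re (inner ℂ ψ u : ℂ) := ha'.symm
    _ ≤ ‖(inner ℂ ψ u : ℂ)‖ := RCLike.re_le_norm _
    _ ≤ ‖ψ‖ * ‖u‖ := norm_inner_le_norm _ _
    _ = ‖u‖ := by rw [hψ, one_mul]
  -- Step B : for each i, ‖⟪P i ψ, u⟫‖ ^ 2 ≤ (∑ j, ‖P j (P i ψ)‖^2) * a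
  have hB : ∀ i : Fin n,
      ‖(inner ℂ (P i ψ) u : ℂ)‖ ^ 2 ≤ (∑ j : Fin n, ‖P j (P i ψ)‖ ^ 2) * a := by
    intro i
    have h1 : ‖(inner ℂ (P i ψ) u : ℂ)‖ ≤ ∑ j : Fin n, ‖P j (P i ψ)‖ * ‖P j ψ‖ := by
      rw [hu, inner_sum]
      refine le_trans (norm_sum_le _ _) (sum_le_sum fun j _ => ?_)
      rw [← hPP j (P i ψ) ψ]
      exact norm_inner_le_norm _ _
    have h2 : (∑ j : Fin n, ‖P j (P i ψ)‖ * ‖P j ψ‖) ^ 2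
        ≤ (∑ j : Fin n, ‖P j (P i ψ)‖ ^ 2) * a := by
      rw [ha]
      exact Finset.sum_mul_sq_le_sq_mul_sq _ _ _
    calc ‖(inner ℂ (P i ψ) u : ℂ)‖ ^ 2
        ≤ (∑ j : Fin n, ‖P j (P i ψ)‖ * ‖P j ψ‖) ^ 2 := by
          apply pow_le_pow_left₀ (norm_nonneg _) h1
      _ ≤ _ := h2
  -- Step C : ‖u‖^2 ≤ ∑ i, ‖⟪P i ψ, u⟫‖
  have hC : ‖u‖ ^ 2 ≤ ∑ i : Fin n, ‖(inner ℂ (P i ψ) u : ℂ)‖ := by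
    have : ‖u‖ ^ 2 = RCLike.re (inner ℂ u u : ℂ) := (inner_self_eq_norm_sq u).symm
    rw [this]
    nth_rewrite 1 [hu]
    rw [sum_inner, map_sum]
    exact sum_le_sum fun i _ => RCLike.re_le_norm _
  -- combine : ‖u‖^4 ≤ n * K * a
  have hsq : (∑ i : Fin n, ‖(inner ℂ (P i ψ) u : ℂ)‖) ^ 2
      ≤ (n : ℝ) * ∑ i : Fin n, ‖(inner ℂ (P i ψ) u : ℂ)‖ ^ 2 := by
    have := sq_sum_le_card_mul_sum_sq (s := (univ : Finset (Fin n)))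
      (f := fun i => ‖(inner ℂ (P i ψ) u : ℂ)‖)
    simpa using this
  have hsum : ∑ i : Fin n, ‖(inner ℂ (P i ψ) u : ℂ)‖ ^ 2 ≤ K * a := by
    rw [hK, sum_mul]
    exact sum_le_sum fun i _ => hB i
  have hmain : ‖u‖ ^ 4 ≤ (n : ℝ) * K * a := by
    have h1 : (‖u‖ ^ 2) ^ 2 ≤ (∑ i : Fin n, ‖(inner ℂ (P i ψ) u : ℂ)‖) ^ 2 :=
      pow_le_pow_left₀ (by positivity) hC 2
    calc ‖u‖ ^ 4 = (‖u‖ ^ 2) ^ 2 := by ring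
      _ ≤ (∑ i : Fin n, ‖(inner ℂ (P i ψ) u : ℂ)‖) ^ 2 := h1
      _ ≤ (n : ℝ) * ∑ i : Fin n, ‖(inner ℂ (P i ψ) u : ℂ)‖ ^ 2 := hsq
      _ ≤ (n : ℝ) * (K * a) := by
          exact mul_le_mul_of_nonneg_left hsum (by positivity)
      _ = (n : ℝ) * K * a := by ring
  have key : a ^ 3 ≤ (n : ℝ) * K := by
    rcases eq_or_lt_of_le hanon with h0 | h0
    · have h3 : a ^ 3 = 0 := by rw [← h0]; ring
      rw [h3]; exact mul_nonneg npos.le hKnon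
    · have h4 : a ^ 4 ≤ (n : ℝ) * K * a := by
        calc a ^ 4 = (a ^ 2) ^ 2 := by ring
          _ ≤ (‖u‖ ^ 2) ^ 2 := by
              apply pow_le_pow_left₀ (by positivity)
              exact pow_le_pow_left₀ hanon hD 2
          _ = ‖u‖ ^ 4 := by ring
          _ ≤ (n : ℝ) * K * a := hmain
      have := (mul_le_mul_iff_of_pos_right h0).mp (by calc a ^ 3 * a = a ^ 4 := by ring
        _ ≤ (n : ℝ) * K * a := h4)
      exact this
  rw [ge_iff_le, show ((1/(n:ℝ)) * a) ^ 3 = a ^ 3 / (n:ℝ) ^ 3 by ring,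
    show (1/(n:ℝ)^2) * K = K / (n:ℝ)^2 by ring,
    div_le_div_iff₀ (by positivity) (by positivity)]
  nlinarith [key, hKnon]
end

section
/- Let P_1, ..., P_n be orthogonal projections on a finite-dimensional complex inner product space and ψ a unit vector. Then (1/n³) Σ_{i,j,k} ‖P_k P_j P_i ψ‖² ≥ ((1/n) Σ_i ‖P_i ψ‖²)⁵. -/
open Finset
open scoped InnerProductSpace ComplexConjugate

section Aux

variable {E : Type*} [NormedAddCommGroup E] [InnerProductSpace ℂ E]

lemma aux_cs_norm {n : ℕ} (v : Fin n → E) :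
    ‖∑ j, v j‖ ^ 2 ≤ (n : ℝ) * ∑ j, ‖v j‖ ^ 2 := by
  calc ‖∑ j, v j‖ ^ 2 ≤ (∑ j, ‖v j‖) ^ 2 := by
        have := norm_sum_le Finset.univ v
        nlinarith [norm_nonneg (∑ j, v j),
          Finset.sum_nonneg (fun j (_ : j ∈ Finset.univ) => norm_nonneg (v j))]
    _ ≤ ((Finset.univ : Finset (Fin n)).card : ℝ) * ∑ j, ‖v j‖ ^ 2 :=
        sq_sum_le_card_mul_sum_sq (s := Finset.univ) (f := fun j => ‖v j‖)
    _ = (n : ℝ) * ∑ j, ‖v j‖ ^ 2 := by simp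

lemma aux_cs_step {n m : ℕ} (L : Fin m → E →ₗ[ℂ] E) (v : Fin n → E) :
    ∑ t, ‖L t (∑ j, v j)‖ ^ 2 ≤ (n : ℝ) * ∑ j, ∑ t, ‖L t (v j)‖ ^ 2 := by
  calc ∑ t, ‖L t (∑ j, v j)‖ ^ 2 = ∑ t, ‖∑ j, L t (v j)‖ ^ 2 := by simp [map_sum]
    _ ≤ ∑ t, ((n : ℝ) * ∑ j, ‖L t (v j)‖ ^ 2) :=
        Finset.sum_le_sum fun t _ => aux_cs_norm _
    _ = (n : ℝ) * ∑ j, ∑ t, ‖L t (v j)‖ ^ 2 := by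
        rw [← Finset.mul_sum, Finset.sum_comm]

lemma aux_jensen_pow5 [FiniteDimensional ℂ E]
    (T : E →ₗ[ℂ] E) (hT : T.IsSymmetric)
    (hpsd : ∀ x : E, 0 ≤ Complex.re (⟪x, T x⟫_ℂ))
    (ψ : E) (hψ : ‖ψ‖ = 1) :
    (Complex.re (⟪ψ, T ψ⟫_ℂ)) ^ 5 ≤ Complex.re (⟪ψ, T (T (T (T (T ψ)))) ⟫_ℂ) := by
  classical
  obtain ⟨N, hN⟩ : ∃ N, Module.finrank ℂ E = N := ⟨_, rfl⟩
  set b : OrthonormalBasis (Fin N) ℂ E := hT.eigenvectorBasis hN with hb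
  set μ : Fin N → ℝ := hT.eigenvalues hN with hμ
  have hTrep : ∀ (x : E) (i : Fin N), b.repr (T x) i = (μ i : ℂ) * b.repr x i :=
    fun x i => hT.eigenvectorBasis_apply_self_apply hN x i
  have key : ∀ x : E, Complex.re (⟪ψ, x⟫_ℂ)
      = ∑ i, Complex.re ((starRingEnd ℂ) (b.repr ψ i) * b.repr x i) := by
    intro x
    have h1 : ⟪ψ, x⟫_ℂ = ⟪b.repr ψ, b.repr x⟫_ℂ := (b.repr.inner_map_map ψ x).symm
    rw [h1, PiLp.inner_apply, Complex.re_sum]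
    exact Finset.sum_congr rfl fun i _ => by rw [RCLike.inner_apply, mul_comm]
  have hterm : ∀ (r : ℝ) (i : Fin N),
      ((starRingEnd ℂ) (b.repr ψ i) * ((r : ℂ) * b.repr ψ i)).re
        = Complex.normSq (b.repr ψ i) * r := by
    intro r i
    simp [Complex.mul_re, Complex.mul_im, Complex.normSq_apply]
    ring
  have hsum1 : ∑ i, Complex.normSq (b.repr ψ i) = 1 := by
    have h0 := key ψ
    have h2 : ⟪ψ, ψ⟫_ℂ = 1 := by
      rw [inner_self_eq_norm_sq_to_K, hψ]; norm_num
    rw [h2] at h0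
    simp only [Complex.one_re] at h0
    rw [h0]
    exact Finset.sum_congr rfl fun i _ => by
      simp [Complex.mul_re, Complex.normSq_apply, Complex.conj_re, Complex.conj_im]
      try ring
  have hμ0 : ∀ i, 0 ≤ μ i := by
    intro i
    have h1 : ⟪b i, T (b i)⟫_ℂ = (μ i : ℂ) := by
      rw [hb, hμ, hT.apply_eigenvectorBasis hN i, inner_smul_right,
        inner_self_eq_norm_sq_to_K]
      have : ‖(hT.eigenvectorBasis hN) i‖ = 1 := (hT.eigenvectorBasis hN).orthonormal.1 i
      rw [this]; norm_num
    have := hpsd (b i)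
    rw [h1] at this
    simpa using this
  have e1 : Complex.re (⟪ψ, T ψ⟫_ℂ) = ∑ i, Complex.normSq (b.repr ψ i) * μ i := by
    rw [key]
    exact Finset.sum_congr rfl fun i _ => by rw [hTrep, hterm]
  have e5 : Complex.re (⟪ψ, T (T (T (T (T ψ))))⟫_ℂ)
      = ∑ i, Complex.normSq (b.repr ψ i) * μ i ^ 5 := by
    rw [key]
    refine Finset.sum_congr rfl fun i _ => ?_
    have h5 : b.repr (T (T (T (T (T ψ))))) i = ((μ i ^ 5 : ℝ) : ℂ) * b.repr ψ i := by
      rw [hTrep, hTrep, hTrep, hTrep, hTrep]; push_cast; ring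
    rw [h5, hterm]
  rw [e1, e5]
  exact Real.pow_arith_mean_le_arith_mean_pow Finset.univ
    (fun i => Complex.normSq (b.repr ψ i)) μ
    (fun i _ => Complex.normSq_nonneg _) hsum1 (fun i _ => hμ0 i) 5

end Aux

theorem projection_rewinding_t3
    {E : Type*} [NormedAddCommGroup E] [InnerProductSpace ℂ E] [FiniteDimensional ℂ E]
    {n : ℕ} (hn : 0 < n)
    (P : Fin n → (E →ₗ[ℂ] E))
    (hproj : ∀ i, (P i) ∘ₗ (P i) = P i)
    (hsym : ∀ i, (P i).IsSymmetric)
    (ψ : E) (hψ : ‖ψ‖ = 1) :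
    (1 / (n : ℝ) ^ 3) * ∑ i : Fin n, ∑ j : Fin n, ∑ k : Fin n, ‖P k (P j (P i ψ))‖ ^ 2
      ≥ ((1 / (n : ℝ)) * ∑ i, ‖P i ψ‖ ^ 2) ^ 5 := by
  have hn' : (0 : ℝ) < n := by exact_mod_cast hn
  set T : E →ₗ[ℂ] E := ∑ i, P i with hTdef
  have hTapp : ∀ x : E, T x = ∑ i, P i x := by
    intro x; rw [hTdef]; simp [LinearMap.sum_apply]
  have hTsym : T.IsSymmetric := by
    intro x y
    rw [hTapp, hTapp, sum_inner, inner_sum]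
    exact Finset.sum_congr rfl fun i _ => hsym i x y
  have sumk : ∀ x : E, ∑ k, ‖P k x‖ ^ 2 = Complex.re (⟪x, T x⟫_ℂ) := by
    intro x
    rw [hTapp, inner_sum, Complex.re_sum]
    refine Finset.sum_congr rfl fun k _ => ?_
    have h1 : ⟪P k x, P k x⟫_ℂ = ⟪x, P k x⟫_ℂ := by
      have h2 := hsym k x (P k x)
      have h3 : P k (P k x) = P k x := LinearMap.congr_fun (hproj k) x
      rw [h3] at h2
      exact h2
    have h4 : ⟪x, P k x⟫_ℂ = ((‖P k x‖ : ℂ)) ^ 2 := by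
      rw [← h1, inner_self_eq_norm_sq_to_K]
      norm_cast
    rw [h4, ← Complex.ofReal_pow, Complex.ofReal_re]
  have hpsd : ∀ x : E, 0 ≤ Complex.re (⟪x, T x⟫_ℂ) := by
    intro x
    rw [← sumk]
    positivity
  have hA : ∀ i, ∑ k, ‖P k (T (P i ψ))‖ ^ 2
      ≤ (n : ℝ) * ∑ j, ∑ k, ‖P k (P j (P i ψ))‖ ^ 2 := by
    intro i
    have h := aux_cs_step P (fun j => P j (P i ψ))
    have hs : (∑ j, P j (P i ψ)) = T (P i ψ) := (hTapp _).symm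
    rw [hs] at h
    exact h
  have hB : ∑ k, ‖P k (T (T ψ))‖ ^ 2
      ≤ (n : ℝ) * ∑ i, ∑ k, ‖P k (T (P i ψ))‖ ^ 2 := by
    have h := aux_cs_step (fun k => (P k) ∘ₗ T) (fun i => P i ψ)
    have hs : (∑ i, P i ψ) = T ψ := (hTapp _).symm
    simp only [LinearMap.comp_apply] at h
    rw [hs] at h
    exact h
  have hC : Complex.re (⟪ψ, T (T (T (T (T ψ))))⟫_ℂ) = ∑ k, ‖P k (T (T ψ))‖ ^ 2 := by
    rw [sumk (T (T ψ))]
    have h2 := hTsym (T ψ) (T (T (T ψ)))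
    have h1 := hTsym ψ (T (T (T (T ψ))))
    rw [h2, h1]
  have jensen := aux_jensen_pow5 T hTsym hpsd ψ hψ
  have hs1 : (∑ i, ‖P i ψ‖ ^ 2) = Complex.re (⟪ψ, T ψ⟫_ℂ) := sumk ψ
  set s : ℝ := ∑ i, ‖P i ψ‖ ^ 2 with hsdef
  set S3 : ℝ := ∑ i : Fin n, ∑ j : Fin n, ∑ k : Fin n, ‖P k (P j (P i ψ))‖ ^ 2 with hS3
  have big : s ^ 5 ≤ (n : ℝ) ^ 2 * S3 := by
    calc s ^ 5 = (Complex.re (⟪ψ, T ψ⟫_ℂ)) ^ 5 := by rw [hs1]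
      _ ≤ Complex.re (⟪ψ, T (T (T (T (T ψ))))⟫_ℂ) := jensen
      _ = ∑ k, ‖P k (T (T ψ))‖ ^ 2 := hC
      _ ≤ (n : ℝ) * ∑ i, ∑ k, ‖P k (T (P i ψ))‖ ^ 2 := hB
      _ ≤ (n : ℝ) * ∑ i, ((n : ℝ) * ∑ j, ∑ k, ‖P k (P j (P i ψ))‖ ^ 2) := by
          refine mul_le_mul_of_nonneg_left ?_ (le_of_lt hn')
          exact Finset.sum_le_sum fun i _ => hA i
      _ = (n : ℝ) ^ 2 * S3 := by rw [hS3, ← Finset.mul_sum]; ring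
  rw [ge_iff_le]
  have h5 : ((1 / (n : ℝ)) * s) ^ 5 = s ^ 5 / (n : ℝ) ^ 5 := by
    field_simp
  rw [h5, div_le_iff₀ (by positivity : (0 : ℝ) < (n : ℝ) ^ 5)]
  calc s ^ 5 ≤ (n : ℝ) ^ 2 * S3 := big
    _ = 1 / (n : ℝ) ^ 3 * S3 * (n : ℝ) ^ 5 := by field_simp
end

section
/- Let P_{ij} (1 ≤ i ≤ n, 1 ≤ j ≤ m) be orthogonal projections on a finite-dimensional complex inner product space and ψ a unit vector. Define V = (1/(nm)) Σ_{i,j} ‖P_{ij} ψ‖² and F = (1/(n² m³)) Σ_{i₁,i₂,j₁,j₂,j₃} ‖P_{i₂ j₃} P_{i₂ j₂} P_{i₁ j₁} ψ‖². Then F ≥ V⁶. -/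
open Finset
open scoped ComplexInnerProductSpace

private lemma sum4_comm' {M : Type*} [AddCommMonoid M] {α β γ δ : Type*}
    [Fintype α] [Fintype β] [Fintype γ] [Fintype δ] (f : α → β → γ → δ → M) :
    ∑ a, ∑ b, ∑ c, ∑ d, f a b c d = ∑ d, ∑ c, ∑ a, ∑ b, f a b c d :=
  calc ∑ a, ∑ b, ∑ c, ∑ d, f a b c d
      = ∑ a, ∑ c, ∑ b, ∑ d, f a b c d :=
        Finset.sum_congr rfl fun a _ => Finset.sum_comm
    _ = ∑ c, ∑ a, ∑ b, ∑ d, f a b c d := Finset.sum_comm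
    _ = ∑ c, ∑ a, ∑ d, ∑ b, f a b c d :=
        Finset.sum_congr rfl fun c _ => Finset.sum_congr rfl fun a _ => Finset.sum_comm
    _ = ∑ c, ∑ d, ∑ a, ∑ b, f a b c d := Finset.sum_congr rfl fun c _ => Finset.sum_comm
    _ = ∑ d, ∑ c, ∑ a, ∑ b, f a b c d := Finset.sum_comm

private lemma sq_sum_step' {ι : Type*} [Fintype ι] {G H : ι → ℝ} {K : ℝ} (hK : 0 ≤ K)
    (h : ∀ i, (G i)^2 ≤ K * H i) :
    (∑ i, G i)^2 ≤ ((Fintype.card ι : ℝ) * K) * ∑ i, H i :=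
  calc (∑ i, G i)^2 ≤ (Fintype.card ι : ℝ) * ∑ i, (G i)^2 := by
        simpa using sq_sum_le_card_mul_sum_sq (s := (Finset.univ : Finset ι)) (f := G)
    _ ≤ (Fintype.card ι : ℝ) * ∑ i, K * H i :=
        mul_le_mul_of_nonneg_left (Finset.sum_le_sum fun i _ => h i) (by positivity)
    _ = ((Fintype.card ι : ℝ) * K) * ∑ i, H i := by rw [← Finset.mul_sum]; ring

set_option maxHeartbeats 1600000 in
theorem projection_rewinding_two_index
    {E : Type*} [NormedAddCommGroup E] [InnerProductSpace ℂ E] [FiniteDimensional ℂ E]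
    {n m : ℕ} (hn : 0 < n) (hm : 0 < m)
    (P : Fin n → Fin m → (E →ₗ[ℂ] E))
    (hproj : ∀ i j, (P i j) ∘ₗ (P i j) = P i j)
    (hsym : ∀ i j, (P i j).IsSymmetric)
    (ψ : E) (hψ : ‖ψ‖ = 1) :
    (1 / ((n : ℝ) ^ 2 * (m : ℝ) ^ 3)) *
      ∑ i₁ : Fin n, ∑ i₂ : Fin n, ∑ j₁ : Fin m, ∑ j₂ : Fin m, ∑ j₃ : Fin m,
        ‖P i₂ j₃ (P i₂ j₂ (P i₁ j₁ ψ))‖ ^ 2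
      ≥ ((1 / ((n : ℝ) * (m : ℝ))) * ∑ i : Fin n, ∑ j : Fin m, ‖P i j ψ‖ ^ 2) ^ 6 := by
  have hn' : (0:ℝ) < n := by exact_mod_cast hn
  have hm' : (0:ℝ) < m := by exact_mod_cast hm
  -- projections applied twice
  have hPP : ∀ i j (x : E), P i j (P i j x) = P i j x := by
    intro i j x
    have := congrArg (fun T : E →ₗ[ℂ] E => T x) (hproj i j)
    simpa using this
  -- each term of s
  have hterm : ∀ i j, ⟪ψ, P i j ψ⟫ = ((‖P i j ψ‖ ^ 2 : ℝ) : ℂ) := by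
    intro i j
    have h1 : ⟪P i j ψ, P i j ψ⟫ = ⟪ψ, P i j (P i j ψ)⟫ := hsym i j ψ (P i j ψ)
    rw [hPP] at h1
    rw [← h1, inner_self_eq_norm_sq_to_K]
    norm_cast
  set u : E := ∑ i : Fin n, ∑ j : Fin m, P i j ψ with hu_def
  set s : ℝ := ∑ i : Fin n, ∑ j : Fin m, ‖P i j ψ‖ ^ 2 with hs_def
  have hs_nonneg : 0 ≤ s := by rw [hs_def]; positivity
  have hinner_u : ⟪ψ, u⟫ = ((s : ℝ) : ℂ) := by
    rw [hu_def, hs_def]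
    simp only [inner_sum, hterm]
    push_cast
    rfl
  have hs_le : s ≤ ‖u‖ := by
    have h := norm_inner_le_norm (𝕜 := ℂ) ψ u
    rw [hψ, one_mul, hinner_u, Complex.norm_real, Real.norm_eq_abs,
      abs_of_nonneg hs_nonneg] at h
    exact h
  rcases eq_or_ne ‖u‖ 0 with hu0 | hu0
  · -- degenerate case
    have hs0 : s = 0 := le_antisymm (hs_le.trans hu0.le) hs_nonneg
    rw [hs0]
    simp only [mul_zero, ge_iff_le]
    rw [zero_pow (by norm_num)]
    refine mul_nonneg (by positivity) ?_
    exact Finset.sum_nonneg fun _ _ => Finset.sum_nonneg fun _ _ =>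
      Finset.sum_nonneg fun _ _ => Finset.sum_nonneg fun _ _ =>
      Finset.sum_nonneg fun _ _ => pow_nonneg (norm_nonneg _) 2
  have hu_pos : 0 < ‖u‖ := (norm_nonneg u).lt_of_ne (Ne.symm hu0)
  set a : ℝ := ‖u‖ with ha_def
  set R : Fin n → (E →ₗ[ℂ] E) := fun i => ∑ j : Fin m, P i j with hR_def
  have hRapp : ∀ i (x : E), R i x = ∑ j : Fin m, P i j x := by
    intro i x; rw [hR_def]; simp [LinearMap.sum_apply]
  have hRsym : ∀ i (x y : E), ⟪R i x, y⟫ = ⟪x, R i y⟫ := by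
    intro i x y
    simp only [hRapp, sum_inner, inner_sum]
    exact Finset.sum_congr rfl fun j _ => hsym i j x y
  set W : ℝ := ∑ i : Fin n, ‖R i u‖ ^ 2 with hW_def
  have hW_nonneg : 0 ≤ W := by rw [hW_def]; positivity
  -- vector identity
  have keyvec : (∑ i₁ : Fin n, ∑ i₂ : Fin n, ∑ j₁ : Fin m, ∑ j₂ : Fin m, ∑ j₃ : Fin m,
      P i₂ j₃ (P i₂ j₂ (P i₁ j₁ ψ))) = ∑ i₂ : Fin n, R i₂ (R i₂ u) := by
    rw [Finset.sum_comm]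
    refine Finset.sum_congr rfl fun i₂ _ => ?_
    rw [sum4_comm' (fun i₁ j₁ j₂ j₃ => P i₂ j₃ (P i₂ j₂ (P i₁ j₁ ψ)))]
    simp only [hRapp, map_sum, hu_def]
  -- inner-product identity
  have keyinner : (∑ i₁ : Fin n, ∑ i₂ : Fin n, ∑ j₁ : Fin m, ∑ j₂ : Fin m, ∑ j₃ : Fin m,
      ⟪u, P i₂ j₃ (P i₂ j₂ (P i₁ j₁ ψ))⟫) = ((W : ℝ) : ℂ) := by
    have expand : ⟪u, (∑ i₁ : Fin n, ∑ i₂ : Fin n, ∑ j₁ : Fin m, ∑ j₂ : Fin m, ∑ j₃ : Fin m,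
        P i₂ j₃ (P i₂ j₂ (P i₁ j₁ ψ)))⟫
        = ∑ i₁ : Fin n, ∑ i₂ : Fin n, ∑ j₁ : Fin m, ∑ j₂ : Fin m, ∑ j₃ : Fin m,
          ⟪u, P i₂ j₃ (P i₂ j₂ (P i₁ j₁ ψ))⟫ := by
      simp only [inner_sum]
    rw [← expand, keyvec, inner_sum]
    have : ∀ i₂, ⟪u, R i₂ (R i₂ u)⟫ = ((‖R i₂ u‖ ^ 2 : ℝ) : ℂ) := by
      intro i₂
      rw [← hRsym i₂ u (R i₂ u), inner_self_eq_norm_sq_to_K]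
      norm_cast
    rw [Finset.sum_congr rfl fun i₂ _ => this i₂, hW_def]
    push_cast
    rfl
  -- ‖u‖² ≤ ‖Su‖
  have hSu : a ^ 2 ≤ ‖∑ i : Fin n, R i u‖ := by
    have h1 : ⟪u, u⟫ = ⟪ψ, ∑ i : Fin n, R i u⟫ := by
      calc ⟪u, u⟫ = ∑ i : Fin n, ∑ j : Fin m, ⟪P i j ψ, u⟫ := by
            conv_lhs => rw [hu_def]
            simp only [sum_inner]
            rfl
        _ = ∑ i : Fin n, ∑ j : Fin m, ⟪ψ, P i j u⟫ :=
            Finset.sum_congr rfl fun i _ => Finset.sum_congr rfl fun j _ => hsym i j ψ u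
        _ = ⟪ψ, ∑ i : Fin n, R i u⟫ := by
            simp only [inner_sum, hRapp]
    have h2 : (‖u‖ ^ 2 : ℝ) = ‖⟪ψ, ∑ i : Fin n, R i u⟫‖ := by
      rw [← h1, inner_self_eq_norm_sq_to_K]
      rw [norm_pow]
      norm_num
    have h3 := norm_inner_le_norm (𝕜 := ℂ) ψ (∑ i : Fin n, R i u)
    rw [hψ, one_mul] at h3
    rw [ha_def]
    linarith [h2 ▸ h3]
  -- ‖Su‖² ≤ n W
  have hSuW : ‖∑ i : Fin n, R i u‖ ^ 2 ≤ (n : ℝ) * W := by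
    have h1 : ‖∑ i : Fin n, R i u‖ ≤ ∑ i : Fin n, ‖R i u‖ := norm_sum_le _ _
    have h2 : (∑ i : Fin n, ‖R i u‖) ^ 2 ≤ ((Fintype.card (Fin n) : ℝ) * 1) * ∑ i : Fin n, ‖R i u‖ ^ 2 :=
      sq_sum_step' zero_le_one fun i => (one_mul _).symm.le
    calc ‖∑ i : Fin n, R i u‖ ^ 2 ≤ (∑ i : Fin n, ‖R i u‖) ^ 2 := by
          apply pow_le_pow_left₀ (norm_nonneg _) h1
      _ ≤ ((Fintype.card (Fin n) : ℝ) * 1) * ∑ i : Fin n, ‖R i u‖ ^ 2 := h2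
      _ = (n : ℝ) * W := by rw [hW_def]; simp [Fintype.card_fin]
  have ha4 : a ^ 4 ≤ (n : ℝ) * W := by
    calc a ^ 4 = (a ^ 2) ^ 2 := by ring
      _ ≤ ‖∑ i : Fin n, R i u‖ ^ 2 := pow_le_pow_left₀ (by positivity) hSu 2
      _ ≤ (n : ℝ) * W := hSuW
  set Fq : ℝ := ∑ i₁ : Fin n, ∑ i₂ : Fin n, ∑ j₁ : Fin m, ∑ j₂ : Fin m, ∑ j₃ : Fin m,
      ‖P i₂ j₃ (P i₂ j₂ (P i₁ j₁ ψ))‖ ^ 2 with hFq_def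
  have hFq_nonneg : 0 ≤ Fq := by
    rw [hFq_def]
    exact Finset.sum_nonneg fun _ _ => Finset.sum_nonneg fun _ _ =>
      Finset.sum_nonneg fun _ _ => Finset.sum_nonneg fun _ _ =>
      Finset.sum_nonneg fun _ _ => pow_nonneg (norm_nonneg _) 2
  -- W ≤ sum of |inner|
  have hW_le : W ≤ ∑ i₁ : Fin n, ∑ i₂ : Fin n, ∑ j₁ : Fin m, ∑ j₂ : Fin m, ∑ j₃ : Fin m,
      ‖⟪u, P i₂ j₃ (P i₂ j₂ (P i₁ j₁ ψ))⟫‖ := by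
    have h0 : W = ‖((W : ℝ) : ℂ)‖ := by
      rw [Complex.norm_real, Real.norm_eq_abs, abs_of_nonneg hW_nonneg]
    rw [h0, ← keyinner]
    refine le_trans (norm_sum_le _ _) (Finset.sum_le_sum fun i₁ _ => ?_)
    refine le_trans (norm_sum_le _ _) (Finset.sum_le_sum fun i₂ _ => ?_)
    refine le_trans (norm_sum_le _ _) (Finset.sum_le_sum fun j₁ _ => ?_)
    refine le_trans (norm_sum_le _ _) (Finset.sum_le_sum fun j₂ _ => ?_)
    exact norm_sum_le _ _
  -- nested Cauchy-Schwarz on counting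
  have c5 : ∀ (i₁ i₂ : Fin n) (j₁ j₂ : Fin m),
      (∑ j₃ : Fin m, ‖⟪u, P i₂ j₃ (P i₂ j₂ (P i₁ j₁ ψ))⟫‖) ^ 2
        ≤ ((m : ℝ) * 1) * ∑ j₃ : Fin m, ‖⟪u, P i₂ j₃ (P i₂ j₂ (P i₁ j₁ ψ))⟫‖ ^ 2 := by
    intro i₁ i₂ j₁ j₂
    simpa using sq_sum_step' (G := fun j₃ => ‖⟪u, P i₂ j₃ (P i₂ j₂ (P i₁ j₁ ψ))⟫‖)
      (H := fun j₃ => ‖⟪u, P i₂ j₃ (P i₂ j₂ (P i₁ j₁ ψ))⟫‖ ^ 2)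
      zero_le_one (fun j₃ => (one_mul _).symm.le)
  have c4 : ∀ (i₁ i₂ : Fin n) (j₁ : Fin m),
      (∑ j₂ : Fin m, ∑ j₃ : Fin m, ‖⟪u, P i₂ j₃ (P i₂ j₂ (P i₁ j₁ ψ))⟫‖) ^ 2
        ≤ ((m : ℝ) * ((m : ℝ) * 1)) *
          ∑ j₂ : Fin m, ∑ j₃ : Fin m, ‖⟪u, P i₂ j₃ (P i₂ j₂ (P i₁ j₁ ψ))⟫‖ ^ 2 := by
    intro i₁ i₂ j₁
    simpa using sq_sum_step' (K := (m : ℝ) * 1) (by positivity) (c5 i₁ i₂ j₁)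
  have c3 : ∀ (i₁ i₂ : Fin n),
      (∑ j₁ : Fin m, ∑ j₂ : Fin m, ∑ j₃ : Fin m, ‖⟪u, P i₂ j₃ (P i₂ j₂ (P i₁ j₁ ψ))⟫‖) ^ 2
        ≤ ((m : ℝ) * ((m : ℝ) * ((m : ℝ) * 1))) *
          ∑ j₁ : Fin m, ∑ j₂ : Fin m, ∑ j₃ : Fin m, ‖⟪u, P i₂ j₃ (P i₂ j₂ (P i₁ j₁ ψ))⟫‖ ^ 2 := by
    intro i₁ i₂
    simpa using sq_sum_step' (K := (m : ℝ) * ((m : ℝ) * 1)) (by positivity) (c4 i₁ i₂)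
  have c2 : ∀ (i₁ : Fin n),
      (∑ i₂ : Fin n, ∑ j₁ : Fin m, ∑ j₂ : Fin m, ∑ j₃ : Fin m,
          ‖⟪u, P i₂ j₃ (P i₂ j₂ (P i₁ j₁ ψ))⟫‖) ^ 2
        ≤ ((n : ℝ) * ((m : ℝ) * ((m : ℝ) * ((m : ℝ) * 1)))) *
          ∑ i₂ : Fin n, ∑ j₁ : Fin m, ∑ j₂ : Fin m, ∑ j₃ : Fin m,
            ‖⟪u, P i₂ j₃ (P i₂ j₂ (P i₁ j₁ ψ))⟫‖ ^ 2 := by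
    intro i₁
    simpa using sq_sum_step' (K := (m : ℝ) * ((m : ℝ) * ((m : ℝ) * 1))) (by positivity) (c3 i₁)
  have c1 : (∑ i₁ : Fin n, ∑ i₂ : Fin n, ∑ j₁ : Fin m, ∑ j₂ : Fin m, ∑ j₃ : Fin m,
          ‖⟪u, P i₂ j₃ (P i₂ j₂ (P i₁ j₁ ψ))⟫‖) ^ 2
        ≤ ((n : ℝ) * ((n : ℝ) * ((m : ℝ) * ((m : ℝ) * ((m : ℝ) * 1))))) *
          ∑ i₁ : Fin n, ∑ i₂ : Fin n, ∑ j₁ : Fin m, ∑ j₂ : Fin m, ∑ j₃ : Fin m,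
            ‖⟪u, P i₂ j₃ (P i₂ j₂ (P i₁ j₁ ψ))⟫‖ ^ 2 := by
    simpa using sq_sum_step' (K := (n : ℝ) * ((m : ℝ) * ((m : ℝ) * ((m : ℝ) * 1))))
      (by positivity) c2
  -- termwise Cauchy-Schwarz
  have hterm2 : ∀ (i₁ i₂ : Fin n) (j₁ j₂ j₃ : Fin m),
      ‖⟪u, P i₂ j₃ (P i₂ j₂ (P i₁ j₁ ψ))⟫‖ ^ 2
        ≤ a ^ 2 * ‖P i₂ j₃ (P i₂ j₂ (P i₁ j₁ ψ))‖ ^ 2 := by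
    intro i₁ i₂ j₁ j₂ j₃
    have h := norm_inner_le_norm (𝕜 := ℂ) u (P i₂ j₃ (P i₂ j₂ (P i₁ j₁ ψ)))
    calc ‖⟪u, P i₂ j₃ (P i₂ j₂ (P i₁ j₁ ψ))⟫‖ ^ 2
        ≤ (‖u‖ * ‖P i₂ j₃ (P i₂ j₂ (P i₁ j₁ ψ))‖) ^ 2 := by
          exact pow_le_pow_left₀ (norm_nonneg _) h 2
      _ = a ^ 2 * ‖P i₂ j₃ (P i₂ j₂ (P i₁ j₁ ψ))‖ ^ 2 := by rw [ha_def]; ring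
  have hsum2 : (∑ i₁ : Fin n, ∑ i₂ : Fin n, ∑ j₁ : Fin m, ∑ j₂ : Fin m, ∑ j₃ : Fin m,
      ‖⟪u, P i₂ j₃ (P i₂ j₂ (P i₁ j₁ ψ))⟫‖ ^ 2) ≤ a ^ 2 * Fq := by
    rw [hFq_def]
    simp only [Finset.mul_sum]
    refine Finset.sum_le_sum fun i₁ _ => Finset.sum_le_sum fun i₂ _ =>
      Finset.sum_le_sum fun j₁ _ => Finset.sum_le_sum fun j₂ _ =>
      Finset.sum_le_sum fun j₃ _ => ?_
    exact hterm2 i₁ i₂ j₁ j₂ j₃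
  -- combine: W² ≤ n²m³ a² Fq
  have hWsq : W ^ 2 ≤ ((n : ℝ) ^ 2 * (m : ℝ) ^ 3) * (a ^ 2 * Fq) := by
    have h1 : W ^ 2 ≤ (∑ i₁ : Fin n, ∑ i₂ : Fin n, ∑ j₁ : Fin m, ∑ j₂ : Fin m, ∑ j₃ : Fin m,
        ‖⟪u, P i₂ j₃ (P i₂ j₂ (P i₁ j₁ ψ))⟫‖) ^ 2 := pow_le_pow_left₀ hW_nonneg hW_le 2
    have h2 := h1.trans c1
    have h3 : ((n : ℝ) * ((n : ℝ) * ((m : ℝ) * ((m : ℝ) * ((m : ℝ) * 1))))) *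
        (∑ i₁ : Fin n, ∑ i₂ : Fin n, ∑ j₁ : Fin m, ∑ j₂ : Fin m, ∑ j₃ : Fin m,
          ‖⟪u, P i₂ j₃ (P i₂ j₂ (P i₁ j₁ ψ))⟫‖ ^ 2)
        ≤ ((n : ℝ) * ((n : ℝ) * ((m : ℝ) * ((m : ℝ) * ((m : ℝ) * 1))))) * (a ^ 2 * Fq) :=
      mul_le_mul_of_nonneg_left hsum2 (by positivity)
    calc W ^ 2 ≤ _ := h2.trans h3
      _ = ((n : ℝ) ^ 2 * (m : ℝ) ^ 3) * (a ^ 2 * Fq) := by ring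
  -- a⁶ ≤ n⁴m³ Fq
  have h6 : a ^ 6 ≤ (n : ℝ) ^ 4 * (m : ℝ) ^ 3 * Fq := by
    have h8 : a ^ 8 ≤ (n : ℝ) ^ 2 * W ^ 2 := by
      have := mul_le_mul ha4 ha4 (by positivity) (by positivity)
      nlinarith [this]
    have h9 : a ^ 8 ≤ (n : ℝ) ^ 2 * (((n : ℝ) ^ 2 * (m : ℝ) ^ 3) * (a ^ 2 * Fq)) :=
      h8.trans (mul_le_mul_of_nonneg_left hWsq (by positivity))
    have hcancel : a ^ 6 * a ^ 2 ≤ ((n : ℝ) ^ 4 * (m : ℝ) ^ 3 * Fq) * a ^ 2 := by nlinarith [h9]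
    exact le_of_mul_le_mul_right hcancel (pow_pos hu_pos 2)
  have hs6 : s ^ 6 ≤ a ^ 6 := pow_le_pow_left₀ hs_nonneg hs_le 6
  rw [ge_iff_le]
  calc ((1 / ((n : ℝ) * m)) * s) ^ 6 = s ^ 6 / ((n : ℝ) ^ 6 * (m : ℝ) ^ 6) := by
        rw [mul_pow, div_pow, one_pow, mul_pow, div_mul_eq_mul_div, one_mul]
    _ ≤ Fq / ((n : ℝ) ^ 2 * (m : ℝ) ^ 3) := by
        rw [div_le_div_iff₀ (by positivity) (by positivity)]
        nlinarith [hs6.trans h6, mul_le_mul_of_nonneg_right (hs6.trans h6)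
          (le_of_lt (show (0:ℝ) < (n : ℝ) ^ 2 * (m : ℝ) ^ 3 by positivity))]
    _ = 1 / ((n : ℝ) ^ 2 * (m : ℝ) ^ 3) * Fq := by ring
end
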